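/- Let π be a Nash equilibrium with equilibrium density f, and for each j let E_j = argmin_{y ∈ ℝ} J(x_j, y, f). Then for every j, E_j = {y ∈ ℝ : (x_j, y) belongs to the support of π}, and ∫_{E_j} f(y) dy = a_j. -/

import Mathlib

open MeasureTheory Set

open scoped ENNReal

/-- The cost `J(x, y, f) = (x - y)^2 + f(y)`. -/
noncomputable def Jcost (f : ℝ → ℝ) (x y : ℝ) : ℝ := (x - y) ^ 2 + f y

/-- The support of a measure `π` on `ℝ × ℝ`: points all of whose open
neighborhoods have positive measure. -/
def msupport (π : Measure (ℝ × ℝ)) : Set (ℝ × ℝ) :=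
  {p | ∀ U : Set (ℝ × ℝ), IsOpen U → p ∈ U → 0 < π U}

/-- `π` is a Nash equilibrium with equilibrium density `f` for the initial
measure `m = ∑ j, a_j δ_{x_j}`:
`π` is a Borel probability measure on `ℝ × ℝ`, `f` is continuous, nonnegative,
with total integral 1; the first marginal of `π` is `m`; the second marginal of
`π` has density `f` with respect to Lebesgue measure; and for `π`-a.e. `(x, y)`,
`y` minimizes `J(x, ·, f)`. -/
def IsNash (n : ℕ) (x a : Fin n → ℝ) (π : Measure (ℝ × ℝ)) (f : ℝ → ℝ) : Prop :=
  IsProbabilityMeasure π ∧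
  Continuous f ∧ (∀ y, 0 ≤ f y) ∧ (∫ y, f y) = 1 ∧
  π.map Prod.fst = ∑ j : Fin n, ENNReal.ofReal (a j) • Measure.dirac (x j) ∧
  π.map Prod.snd = volume.withDensity (fun y => ENNReal.ofReal (f y)) ∧
  (∀ᵐ p ∂π, ∀ z : ℝ, Jcost f p.1 p.2 ≤ Jcost f p.1 z)

/-- With `E_j = argmin_y J(x_j, y, f)`: `E_j = {y : (x_j, y) ∈ supp π}` and
`∫_{E_j} f = a_j` for every `j`. -/
lemma aux_pos_lintegral (f : ℝ → ℝ) (hf : Continuous f) {s w t : ℝ}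
    (hs : s < w) (ht : w < t) (hw : 0 < f w) :
    0 < ∫⁻ z in Ioo s t, ENNReal.ofReal (f z) := by
  obtain ⟨δ, δpos, hδ⟩ := Metric.continuousAt_iff.mp hf.continuousAt (f w / 2) (by linarith)
  set δ' := min δ (min (w - s) (t - w)) with hδ'
  have hδ'pos : 0 < δ' := by simp [hδ', δpos]; constructor <;> linarith
  have hsub : Ioo (w - δ') (w + δ') ⊆ Ioo s t := by
    intro z hz
    simp only [mem_Ioo] at hz ⊢
    have h1 : δ' ≤ w - s := le_trans (min_le_right _ _) (min_le_left _ _)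
    have h2 : δ' ≤ t - w := le_trans (min_le_right _ _) (min_le_right _ _)
    constructor <;> linarith
  have hlow : ∀ z ∈ Ioo (w - δ') (w + δ'), ENNReal.ofReal (f w / 2) ≤ ENNReal.ofReal (f z) := by
    intro z hz
    have hd : dist z w < δ := by
      simp only [mem_Ioo] at hz
      rw [Real.dist_eq]
      have : δ' ≤ δ := min_le_left _ _
      rw [abs_lt]; constructor <;> linarith
    have := hδ hd
    rw [Real.dist_eq, abs_lt] at this
    exact ENNReal.ofReal_le_ofReal (by linarith)
  calc (0:ℝ≥0∞) < ENNReal.ofReal (f w / 2) * volume (Ioo (w - δ') (w + δ')) := by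
        rw [Real.volume_Ioo]
        apply ENNReal.mul_pos
        · simp [ENNReal.ofReal_pos]; linarith
        · simp [ENNReal.ofReal_pos]; linarith
    _ = ∫⁻ _ in Ioo (w - δ') (w + δ'), ENNReal.ofReal (f w / 2) := by
        rw [setLIntegral_const]
    _ ≤ ∫⁻ z in Ioo (w - δ') (w + δ'), ENNReal.ofReal (f z) := setLIntegral_mono (by fun_prop) hlow
    _ ≤ ∫⁻ z in Ioo s t, ENNReal.ofReal (f z) := lintegral_mono_set hsub

lemma aux_zero_of_lintegral (f : ℝ → ℝ) (hf : Continuous f) (hf0 : ∀ y, 0 ≤ f y) {s w t : ℝ}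
    (hs : s < w) (ht : w < t) (h : ∫⁻ z in Ioo s t, ENNReal.ofReal (f z) = 0) :
    f w = 0 := by
  by_contra hw
  have : 0 < f w := lt_of_le_of_ne (hf0 w) (Ne.symm hw)
  exact absurd h (ne_of_gt (aux_pos_lintegral f hf hs ht this))

lemma aux_parabola {c xj s w t : ℝ} (h1 : (xj - s)^2 ≤ c) (h2 : (xj - t)^2 ≤ c)
    (hs : s < w) (ht : w < t) : (xj - w)^2 < c := by
  rcases le_or_gt xj w with h | h
  · nlinarith
  · nlinarith

lemma aux_order {f : ℝ → ℝ} {xj xk u v : ℝ} (hjk : xj < xk)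
    (hu : ∀ z, Jcost f xj u ≤ Jcost f xj z)
    (hv : ∀ z, Jcost f xk v ≤ Jcost f xk z) : u ≤ v := by
  by_contra h
  push_neg at h
  have h1 := hu v
  have h2 := hv u
  simp only [Jcost] at h1 h2
  nlinarith [mul_pos (sub_pos.mpr hjk) (sub_pos.mpr h)]

theorem stmt_4 (n : ℕ) (hn : 1 ≤ n) (x : Fin n → ℝ) (hx : StrictMono x)
    (a : Fin n → ℝ) (ha : ∀ j, 0 < a j) (hsum : ∑ j, a j = 1)
    (π : Measure (ℝ × ℝ)) (f : ℝ → ℝ) (hNash : IsNash n x a π f) :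
    ∀ j : Fin n,
      {y : ℝ | ∀ z : ℝ, Jcost f (x j) y ≤ Jcost f (x j) z} =
        {y : ℝ | (x j, y) ∈ msupport π} ∧
      (∫ y in {y : ℝ | ∀ z : ℝ, Jcost f (x j) y ≤ Jcost f (x j) z}, f y) = a j := by
  obtain ⟨hprob, hfc, hf0, hf1, hfst, hsnd, hae⟩ := hNash
  set μ := volume.withDensity fun y => ENNReal.ofReal (f y) with hμ
  have hxinj : Function.Injective x := hx.injective
  set E : Fin n → Set ℝ := fun j => {y | ∀ z, Jcost f (x j) y ≤ Jcost f (x j) z} with hE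
  have hEclosed : ∀ j, IsClosed (E j) := by
    intro j
    have h : E j = ⋂ z, {y | Jcost f (x j) y ≤ Jcost f (x j) z} := by
      ext y; simp [hE, mem_iInter]
    rw [h]
    exact isClosed_iInter fun z =>
      isClosed_le (by unfold Jcost; fun_prop) (by unfold Jcost; fun_prop)
  have hEmeas : ∀ j, MeasurableSet (E j) := fun j => (hEclosed j).measurableSet
  set M : Set (ℝ × ℝ) := {p | ∀ z, Jcost f p.1 p.2 ≤ Jcost f p.1 z} with hM
  have hMclosed : IsClosed M := by
    have h : M = ⋂ z, {p : ℝ × ℝ | Jcost f p.1 p.2 ≤ Jcost f p.1 z} := by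
      ext p; simp [hM, mem_iInter]
    rw [h]
    exact isClosed_iInter fun z =>
      isClosed_le (by unfold Jcost; fun_prop) (by unfold Jcost; fun_prop)
  have hMc : π Mᶜ = 0 := by
    have h : Mᶜ = {p : ℝ × ℝ | ¬ ∀ z, Jcost f p.1 p.2 ≤ Jcost f p.1 z} := by
      ext p; simp [hM]
    rw [h]
    exact ae_iff.mp hae
  have hsnd' : ∀ B : Set ℝ, MeasurableSet B → π (univ ×ˢ B) = μ B := by
    intro B hB
    rw [← hsnd, Measure.map_apply measurable_snd hB]
    congr 1; ext p; simp
  have hfst' : ∀ A : Set ℝ, MeasurableSet A →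
      π (A ×ˢ univ) = ∑ k, ENNReal.ofReal (a k) * A.indicator 1 (x k) := by
    intro A hA
    have h1 : A ×ˢ (univ : Set ℝ) = Prod.fst ⁻¹' A := by ext p; simp
    rw [h1, ← Measure.map_apply measurable_fst hA, hfst, Measure.finset_sum_apply]
    congr 1; ext k
    rw [Measure.smul_apply, Measure.dirac_apply' _ hA, smul_eq_mul]
  have hsing : ∀ j, π ({x j} ×ˢ (univ : Set ℝ)) = ENNReal.ofReal (a j) := by
    intro j
    rw [hfst' _ (measurableSet_singleton _), Finset.sum_eq_single j]
    · simp
    · intro k _ hk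
      have hxk : x k ∉ ({x j} : Set ℝ) := by
        simp only [mem_singleton_iff]
        exact fun h => hk (hxinj h)
      simp [indicator_of_notMem hxk]
    · simp
  have hFc : π ((Set.range x)ᶜ ×ˢ (univ : Set ℝ)) = 0 := by
    rw [hfst' _ (Set.finite_range x).measurableSet.compl]
    apply Finset.sum_eq_zero
    intro k _
    have hxk : x k ∉ (Set.range x)ᶜ := by simp
    simp [indicator_of_notMem hxk]
  have hdecomp : ∀ B : Set ℝ, MeasurableSet B → μ B = ∑ k, π ({x k} ×ˢ B) := by
    intro B hB
    rw [← hsnd' B hB]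
    have h1 : (univ : Set ℝ) ×ˢ B = (⋃ k, {x k} ×ˢ B) ∪ ((Set.range x)ᶜ ×ˢ B) := by
      ext p
      simp only [mem_prod, mem_univ, true_and, mem_union, mem_iUnion, mem_singleton_iff,
        mem_compl_iff, mem_range]
      constructor
      · intro hp
        by_cases h : ∃ k, x k = p.1
        · obtain ⟨k, hk⟩ := h; exact Or.inl ⟨k, hk.symm, hp⟩
        · exact Or.inr ⟨h, hp⟩
      · rintro (⟨k, _, hp⟩ | ⟨_, hp⟩) <;> exact hp
    have hnull : π ((Set.range x)ᶜ ×ˢ B) = 0 := by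
      apply measure_mono_null _ hFc
      intro p hp
      exact ⟨hp.1, trivial⟩
    have h2 : π (univ ×ˢ B) = π (⋃ k, {x k} ×ˢ B) := by
      apply le_antisymm
      · rw [h1]
        refine (measure_union_le _ _).trans_eq ?_
        rw [hnull, add_zero]
      · apply measure_mono
        rw [h1]
        exact subset_union_left
    rw [h2, measure_iUnion ?_ (fun k => (measurableSet_singleton _).prod hB)]
    · exact tsum_fintype _
    · intro k l hkl
      simp only [Set.disjoint_left]
      rintro p ⟨hp1, _⟩ ⟨hp2, _⟩
      simp only [mem_singleton_iff] at hp1 hp2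
      exact hkl (hxinj (hp1.symm.trans hp2 ▸ rfl))
  have hν0 : ∀ k, π ({x k} ×ˢ (E k)ᶜ) = 0 := by
    intro k
    apply measure_mono_null _ hMc
    rintro ⟨p1, p2⟩ ⟨hp1, hp2⟩
    simp only [mem_singleton_iff] at hp1
    subst hp1
    simp only [hE, hM, mem_compl_iff, mem_setOf_eq] at hp2 ⊢
    exact hp2
  have hEE : ∀ j k, j ≠ k → (E j ∩ E k).Subsingleton := by
    intro j k hjk u hu v hv
    rcases lt_trichotomy j k with h | h | h
    · exact le_antisymm (aux_order (hx h) hu.1 hv.2) (aux_order (hx h) hv.1 hu.2)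
    · exact absurd h hjk
    · exact le_antisymm (aux_order (hx h) hu.2 hv.1) (aux_order (hx h) hv.2 hu.1)
  have hsub : ∀ j (S : Set ℝ), MeasurableSet S → S ⊆ E j → π ({x j} ×ˢ S) = μ S := by
    intro j S hS hSE
    rw [hdecomp S hS, Finset.sum_eq_single j]
    · intro k _ hkj
      have hP : μ (E j ∩ E k) = 0 :=
        (withDensity_absolutelyContinuous volume _)
          ((hEE j k (Ne.symm hkj)).measure_zero volume)
      have hQ : π (univ ×ˢ (E j ∩ E k)) = 0 :=
        (hsnd' _ ((hEmeas j).inter (hEmeas k))).trans hP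
      have h1 : π ({x k} ×ˢ (S ∩ E k)) = 0 := by
        apply measure_mono_null _ hQ
        rintro p ⟨_, hp2⟩
        exact ⟨trivial, hSE hp2.1, hp2.2⟩
      have h2 : π ({x k} ×ˢ S) ≤ π ({x k} ×ˢ (S ∩ E k)) + π ({x k} ×ˢ (E k)ᶜ) := by
        refine (measure_mono ?_).trans (measure_union_le _ _)
        rintro ⟨p1, p2⟩ ⟨hp1, hp2⟩
        by_cases h : p2 ∈ E k
        · exact Or.inl ⟨hp1, hp2, h⟩
        · exact Or.inr ⟨hp1, h⟩
      rw [h1, hν0 k, add_zero] at h2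
      exact le_antisymm h2 zero_le
    · intro h
      exact absurd (Finset.mem_univ j) h
  have hνtot : ∀ j, π ({x j} ×ˢ E j) = ENNReal.ofReal (a j) := by
    intro j
    have hdis : Disjoint ({x j} ×ˢ E j) ({x j} ×ˢ (E j)ᶜ) :=
      Set.disjoint_left.mpr (fun p hp hp' => hp'.2 hp.2)
    have hsplit : π ({x j} ×ˢ (univ : Set ℝ)) = π ({x j} ×ˢ E j) + π ({x j} ×ˢ (E j)ᶜ) := by
      rw [← measure_union hdis ((measurableSet_singleton _).prod (hEmeas j).compl)]
      congr 1
      ext p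
      simp only [mem_prod, mem_union, mem_compl_iff, mem_univ, and_true]
      constructor
      · intro hp
        by_cases h : p.2 ∈ E j
        · exact Or.inl ⟨hp, h⟩
        · exact Or.inr ⟨hp, h⟩
      · rintro (⟨hp, _⟩ | ⟨hp, _⟩) <;> exact hp
    rw [hν0 j, add_zero] at hsplit
    rw [← hsplit, hsing j]
  have hμE : ∀ j, μ (E j) = ENNReal.ofReal (a j) := fun j => by
    rw [← hsub j (E j) (hEmeas j) subset_rfl, hνtot j]
  have hK : μ ((⋃ k, E k)ᶜ) = 0 := by
    rw [hdecomp _ (MeasurableSet.iUnion fun k => hEmeas k).compl]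
    apply Finset.sum_eq_zero
    intro k _
    apply measure_mono_null _ (hν0 k)
    rintro ⟨p1, p2⟩ ⟨hp1, hp2⟩
    exact ⟨hp1, fun h => hp2 (mem_iUnion.mpr ⟨k, h⟩)⟩
  have hconv : ∀ j, ∀ u ∈ E j, ∀ v ∈ E j, Icc u v ⊆ E j := by
    intro j u hu v hv w hw
    by_contra hwE
    have hne1 : (E j ∩ Icc u w).Nonempty := ⟨u, hu, le_refl u, hw.1⟩
    have hcl1 : IsClosed (E j ∩ Icc u w) := (hEclosed j).inter isClosed_Icc
    have hb1 : BddAbove (E j ∩ Icc u w) := ⟨w, fun z hz => hz.2.2⟩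
    set u' := sSup (E j ∩ Icc u w) with hu'def
    have hu' : u' ∈ E j ∩ Icc u w := hcl1.csSup_mem hne1 hb1
    have hne2 : (E j ∩ Icc w v).Nonempty := ⟨v, hv, hw.2, le_refl v⟩
    have hcl2 : IsClosed (E j ∩ Icc w v) := (hEclosed j).inter isClosed_Icc
    have hb2 : BddBelow (E j ∩ Icc w v) := ⟨w, fun z hz => hz.2.1⟩
    set v' := sInf (E j ∩ Icc w v) with hv'def
    have hv' : v' ∈ E j ∩ Icc w v := hcl2.csInf_mem hne2 hb2
    have hu'w : u' < w := lt_of_le_of_ne hu'.2.2 (fun h => hwE (h ▸ hu'.1))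
    have hwv' : w < v' := lt_of_le_of_ne hv'.2.1 (fun h => hwE (h ▸ hv'.1))
    have hgap : Ioo u' v' ⊆ (⋃ k, E k)ᶜ := by
      rintro z hz hzK
      simp only [mem_iUnion] at hzK
      obtain ⟨k, hzk⟩ := hzK
      rcases lt_trichotomy k j with h | h | h
      · exact absurd (aux_order (hx h) hzk hu'.1) (not_le.mpr hz.1)
      · subst h
        rcases le_or_gt z w with hzw | hzw
        · have hle : z ≤ u' := le_csSup hb1 ⟨hzk, le_trans hu'.2.1 hz.1.le, hzw⟩
          exact absurd hle (not_le.mpr hz.1)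
        · have hle : v' ≤ z := csInf_le hb2 ⟨hzk, hzw.le, le_trans hz.2.le hv'.2.2⟩
          exact absurd hle (not_le.mpr hz.2)
      · exact absurd (aux_order (hx h) hv'.1 hzk) (not_le.mpr hz.2)
    have hμgap : μ (Ioo u' v') = 0 := measure_mono_null hgap hK
    have hlint : ∫⁻ z in Ioo u' v', ENNReal.ofReal (f z) = 0 := by
      rw [← withDensity_apply _ measurableSet_Ioo]
      exact hμgap
    have hfw : f w = 0 := aux_zero_of_lintegral f hfc hf0 hu'w hwv' hlint
    have hcu' : (x j - u') ^ 2 ≤ Jcost f (x j) u := by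
      have h1 := hu'.1 u
      simp only [Jcost] at h1 ⊢
      linarith [hf0 u']
    have hcv' : (x j - v') ^ 2 ≤ Jcost f (x j) u := by
      have h1 := hv'.1 u
      simp only [Jcost] at h1 ⊢
      linarith [hf0 v']
    have hpw : (x j - w) ^ 2 < Jcost f (x j) u := aux_parabola hcu' hcv' hu'w hwv'
    have hle := hu w
    simp only [Jcost] at hle hpw
    linarith
  have hEtwo : ∀ j, ∃ u ∈ E j, ∃ v ∈ E j, u < v := by
    intro j
    by_contra h
    push_neg at h
    have hss : (E j).Subsingleton := by
      intro u hu v hv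
      exact le_antisymm (h v hv u hu) (h u hu v hv)
    have h0 : μ (E j) = 0 :=
      (withDensity_absolutelyContinuous volume _) (hss.measure_zero volume)
    rw [hμE j] at h0
    rw [ENNReal.ofReal_eq_zero] at h0
    linarith [ha j]
  have hsupp1 : ∀ j, ∀ y ∈ E j, ∀ U : Set (ℝ × ℝ), IsOpen U → (x j, y) ∈ U → 0 < π U := by
    intro j y hy U hU hmem
    obtain ⟨ε, εpos, hball⟩ := Metric.isOpen_iff.mp hU _ hmem
    obtain ⟨t', ht'E, ht'ne, ht'close⟩ : ∃ t', t' ∈ E j ∧ t' ≠ y ∧ |t' - y| < ε := by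
      obtain ⟨u, hu, v, hv, huv⟩ := hEtwo j
      rcases lt_or_ge y v with h | h
      · refine ⟨min (y + ε / 2) ((y + v) / 2), ?_, ?_, ?_⟩
        · apply hconv j y hy v hv
          refine ⟨le_min (by linarith) (by linarith), le_trans (min_le_right _ _) (by linarith)⟩
        · have hgt : y < min (y + ε / 2) ((y + v) / 2) := lt_min (by linarith) (by linarith)
          exact ne_of_gt hgt
        · have h1 : min (y + ε / 2) ((y + v) / 2) ≤ y + ε / 2 := min_le_left _ _
          have h2 : y < min (y + ε / 2) ((y + v) / 2) := lt_min (by linarith) (by linarith)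
          rw [abs_lt]
          constructor <;> linarith
      · have huy : u < y := lt_of_lt_of_le huv h
        refine ⟨max (y - ε / 2) ((y + u) / 2), ?_, ?_, ?_⟩
        · apply hconv j u hu y hy
          refine ⟨le_trans (by linarith) (le_max_right _ _), max_le (by linarith) (by linarith)⟩
        · have hlt : max (y - ε / 2) ((y + u) / 2) < y := max_lt (by linarith) (by linarith)
          exact ne_of_lt hlt
        · have h1 : y - ε / 2 ≤ max (y - ε / 2) ((y + u) / 2) := le_max_left _ _
          have h2 : max (y - ε / 2) ((y + u) / 2) < y := max_lt (by linarith) (by linarith)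
          rw [abs_lt]
          constructor <;> linarith
    set s := min y t' with hs
    set t := max y t' with ht
    have hst : s < t := min_lt_max.mpr (Ne.symm ht'ne)
    have hsE : s ∈ E j := by
      rcases le_total y t' with h | h
      · rw [hs, min_eq_left h]; exact hy
      · rw [hs, min_eq_right h]; exact ht'E
    have htE : t ∈ E j := by
      rcases le_total y t' with h | h
      · rw [ht, max_eq_right h]; exact ht'E
      · rw [ht, max_eq_left h]; exact hy
    have hIcc : Icc s t ⊆ E j := hconv j s hsE t htE
    set w := (s + t) / 2 with hw
    have hsw : s < w := by rw [hw]; linarith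
    have hwt : w < t := by rw [hw]; linarith
    have hwE : w ∈ E j := hIcc ⟨hsw.le, hwt.le⟩
    have hcs : (x j - s) ^ 2 ≤ Jcost f (x j) y := by
      have h1 := hsE y
      simp only [Jcost] at h1 ⊢
      linarith [hf0 s]
    have hct : (x j - t) ^ 2 ≤ Jcost f (x j) y := by
      have h1 := htE y
      simp only [Jcost] at h1 ⊢
      linarith [hf0 t]
    have hpw : (x j - w) ^ 2 < Jcost f (x j) y := aux_parabola hcs hct hsw hwt
    have hfw : 0 < f w := by
      have h1 := hy w
      simp only [Jcost] at h1 hpw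
      linarith
    have hpos : 0 < μ (Ioo s t) := by
      rw [hμ, withDensity_apply _ measurableSet_Ioo]
      exact aux_pos_lintegral f hfc hsw hwt hfw
    have heq : π ({x j} ×ˢ Ioo s t) = μ (Ioo s t) :=
      hsub j _ measurableSet_Ioo (fun z hz => hIcc (Ioo_subset_Icc_self hz))
    have hUsub : {x j} ×ˢ Ioo s t ⊆ U := by
      rintro ⟨p1, p2⟩ ⟨hp1, hp2⟩
      apply hball
      simp only [mem_singleton_iff] at hp1
      rw [Metric.mem_ball, Prod.dist_eq, hp1]
      have hd1 : dist (x j) (x j) = 0 := dist_self _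
      have habs := abs_lt.mp ht'close
      have hb1 : y - ε < s := lt_min (by linarith) (by linarith)
      have hb2 : t < y + ε := max_lt (by linarith) (by linarith)
      have hd2 : dist p2 y < ε := by
        rw [Real.dist_eq, abs_lt]
        obtain ⟨hz1, hz2⟩ := hp2
        constructor <;> linarith
      rw [hd1]
      exact max_lt (by linarith) hd2
    calc (0 : ℝ≥0∞) < μ (Ioo s t) := hpos
      _ = π ({x j} ×ˢ Ioo s t) := heq.symm
      _ ≤ π U := measure_mono hUsub
  intro j
  have key : E j = {y : ℝ | (x j, y) ∈ msupport π} ∧ (∫ y in E j, f y) = a j := by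
    constructor
    · ext y
      simp only [mem_setOf_eq]
      constructor
      · intro hy
        exact fun U hU hm => hsupp1 j y hy U hU hm
      · intro hy
        by_contra hyE
        have h1 := hy Mᶜ hMclosed.isOpen_compl ?_
        · rw [hMc] at h1
          exact lt_irrefl 0 h1
        · simp only [hM, mem_compl_iff, mem_setOf_eq]
          simp only [hE, mem_setOf_eq] at hyE
          exact hyE
    · have h1 : ∫ y in E j, f y = (∫⁻ y in E j, ENNReal.ofReal (f y)).toReal :=
        integral_eq_lintegral_of_nonneg_ae (Filter.Eventually.of_forall hf0)
          hfc.aestronglyMeasurable.restrict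
      rw [h1, ← withDensity_apply _ (hEmeas j), ← hμ, hμE j,
        ENNReal.toReal_ofReal (ha j).le]
  exact key
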